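/- Let K = F(z) and let σ₁,…,σ_r (1 ≤ r ≤ k) be independent elements of G^σ, meaning that σ₁^{ℓ₁}···σ_r^{ℓ_r} = 1 with ℓ_i ∈ ℤ forces all ℓ_i = 0. Then there exists a K-automorphism φ of K(y) such that φ∘σ_i = σ_{y_i}∘φ for all 1 ≤ i ≤ r, and consequently, for every f ∈ K(y), f is (σ₁,…,σ_r)-summable in K(y) if and only if φ(f) is (σ_{y₁},…,σ_{y_r})-summable in K(y). -/

import Mathlib

noncomputable section

/-- The field of rational functions `F(x₁,…,xₙ)`, modeled as the fraction field of the
multivariate polynomial ring. -/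
abbrev MvRat (F : Type*) [Field F] (n : ℕ) := FractionRing (MvPolynomial (Fin n) F)

/-- The image of the variable `xᵢ` in `F(x₁,…,xₙ)`. -/
def xv {F : Type*} [Field F] {n : ℕ} (i : Fin n) : MvRat F n :=
  algebraMap (MvPolynomial (Fin n) F) (MvRat F n) (MvPolynomial.X i)

/-- The subfield `F(x₂,…,xₙ)` of `F(x₁,…,xₙ)` (the variable `x₁` has index `0`). -/
def hatField (F : Type*) [Field F] (n : ℕ) [NeZero n] : Subfield (MvRat F n) :=
  Subfield.closure (Set.range (algebraMap F (MvRat F n)) ∪ (xv '' {i : Fin n | i ≠ 0}))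

/-- `a` is a polynomial in `x1` over the subfield `E` of degree `< D`. -/
def IsPolyDeg {L : Type*} [Field L] (E : Subfield L) (x1 : L) (D : ℕ) (a : L) : Prop :=
  ∃ cf : Fin D → E, a = ∑ k : Fin D, (cf k : L) * x1 ^ (k : ℕ)

/-- `a` is a polynomial in `x1` over the subfield `E`, i.e. `a ∈ E[x1]`. -/
def IsPolyE {L : Type*} [Field L] (E : Subfield L) (x1 a : L) : Prop :=
  ∃ D : ℕ, IsPolyDeg E x1 D a

/-- `a` is a Laurent polynomial in `x1` over the subfield `E`, i.e. `a ∈ E[x1, x1⁻¹]`. -/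
def IsLaurent {L : Type*} [Field L] (E : Subfield L) (x1 a : L) : Prop :=
  ∃ (s : Finset ℤ) (cf : ℤ → L), (∀ k ∈ s, cf k ∈ E) ∧ a = ∑ k ∈ s, cf k * x1 ^ k

/-- For a family `θ` of `F`-automorphisms and an exponent vector `α`,
the product `∏ i, θᵢ^(αᵢ)` (the element `θ_x^α` of the group generated by the `θᵢ`). -/
def thetaPowS {F L : Type*} [CommSemiring F] [Semiring L] [Algebra F L] {ι : Type*} [Fintype ι]
    (θ : ι → (L ≃ₐ[F] L)) (α : ι → ℤ) : L ≃ₐ[F] L :=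
  (Finset.univ.toList.map fun i => θ i ^ α i).prod

/-- Membership in the space `V_{[d]_G,j}`: `f` is a finite sum of fractions `a_g / g(d)^j`
with `g` in the group `G` and `a_g ∈ E[x₁]` of degree `< D` (`= deg_{x₁} d`). -/
def MemV {F L : Type*} [Field F] [Field L] [Algebra F L] (G : Set (L ≃ₐ[F] L))
    (E : Subfield L) (x1 : L) (dd : L) (D j : ℕ) (f : L) : Prop :=
  ∃ s : Finset (L ≃ₐ[F] L), ↑s ⊆ G ∧ ∃ a : (L ≃ₐ[F] L) → L,
    (∀ g ∈ s, IsPolyDeg E x1 D (a g)) ∧ f = ∑ g ∈ s, a g / (g dd) ^ j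

/-- `p` and `p'` are `G`-equivalent: `p = c · g(p')` for some nonzero `c ∈ F` and `g ∈ G`. -/
def GEquivSet {F L : Type*} [Field F] [Field L] [Algebra F L] (G : Set (L ≃ₐ[F] L))
    (p p' : L) : Prop :=
  ∃ c : F, c ≠ 0 ∧ ∃ g ∈ G, p = algebraMap F L c * g p'

/-- `w` divides `p` inside the ring `E[x1]`. -/
def DvdE {L : Type*} [Field L] (E : Subfield L) (x1 w p : L) : Prop :=
  ∃ u : L, IsPolyE E x1 u ∧ p = w * u

/-- `p ∈ E[x₁]` is normal w.r.t. `θ1`: `gcd(p, θ1^ℓ(p)) = 1` for all nonzero `ℓ ∈ ℤ`,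
i.e. every common divisor (in `E[x₁]`) of `p` and `θ1^ℓ(p)` is a unit (lies in `E`). -/
def NormalWrt {F L : Type*} [Field F] [Field L] [Algebra F L] (E : Subfield L) (x1 : L)
    (θ1 : L ≃ₐ[F] L) (p : L) : Prop :=
  ∀ ℓ : ℤ, ℓ ≠ 0 → ∀ w : L, IsPolyE E x1 w →
    DvdE E x1 w p → DvdE E x1 w ((θ1 ^ ℓ) p) → w ∈ E

/-- The isotropy group of `p` (in exponent-vector coordinates): the subgroup of `ℤ^ι`
of all `α` with `Θ(α)(p) = c·p` for some nonzero `c ∈ F`. -/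
def isotropyZ {F L : Type*} [Field F] [Field L] [Algebra F L] {ι : Type*}
    (Θ : (ι → ℤ) → (L ≃ₐ[F] L))
    (hadd : ∀ α β, Θ (α + β) = Θ α * Θ β) (h0 : Θ 0 = 1) (p : L) :
    AddSubgroup (ι → ℤ) where
  carrier := {α | ∃ c : F, c ≠ 0 ∧ Θ α p = algebraMap F L c * p}
  zero_mem' := ⟨1, one_ne_zero, by simp [h0]⟩
  add_mem' := by
    rintro α β ⟨c, hc, hcp⟩ ⟨e, he, hep⟩
    refine ⟨e * c, mul_ne_zero he hc, ?_⟩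
    rw [hadd, AlgEquiv.mul_apply, hep, map_mul, AlgEquiv.commutes, hcp, map_mul]
    ring
  neg_mem' := by
    rintro α ⟨c, hc, hcp⟩
    refine ⟨c⁻¹, inv_ne_zero hc, ?_⟩
    have h1 : Θ (-α) (Θ α p) = p := by
      rw [← AlgEquiv.mul_apply, ← hadd, neg_add_cancel, h0, AlgEquiv.one_apply]
    rw [hcp, map_mul, AlgEquiv.commutes] at h1
    have hc0 : (algebraMap F L) c ≠ 0 :=
      (map_ne_zero_iff _ (algebraMap F L).injective).mpr hc
    rw [map_inv₀, eq_inv_mul_iff_mul_eq₀ hc0]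
    exact h1

end


section MyAux

variable {K : Type*} [Field K] {k : ℕ}

lemma my_xv_ext (g h : MvRat K k ≃ₐ[K] MvRat K k)
    (H : ∀ j, g (xv j) = h (xv j)) : g = h := by
  have hAH : g.toAlgHom.comp (IsScalarTower.toAlgHom K (MvPolynomial (Fin k) K) (MvRat K k))
      = h.toAlgHom.comp (IsScalarTower.toAlgHom K (MvPolynomial (Fin k) K) (MvRat K k)) :=
    MvPolynomial.algHom_ext fun j => by simpa [xv] using H j
  apply AlgEquiv.ext
  intro x
  obtain ⟨p, q, -, rfl⟩ := IsFractionRing.div_surjective (A := MvPolynomial (Fin k) K) x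
  have h1 := DFunLike.congr_fun hAH p
  have h2 := DFunLike.congr_fun hAH q
  simp only [AlgHom.comp_apply, AlgEquiv.toAlgHom_eq_coe, AlgHom.coe_coe,
    IsScalarTower.coe_toAlgHom'] at h1 h2
  rw [map_div₀, map_div₀]
  exact congrArg₂ (· / ·) h1 h2

lemma my_zpow_shift {F L : Type*} [CommSemiring F] [CommRing L] [Algebra F L]
    (g : L ≃ₐ[F] L) (x : L) (d : ℤ) (hg : g x = x + (d : L)) (n : ℤ) :
    (g ^ n) x = x + ((n * d : ℤ) : L) := by
  have hinv : g⁻¹ x = x - (d : L) := by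
    apply g.injective
    have : (g⁻¹ : L ≃ₐ[F] L) = g.symm := rfl
    rw [this, AlgEquiv.apply_symm_apply, map_sub, hg, map_intCast]
    ring
  induction n using Int.induction_on with
  | zero => simp
  | succ n ih =>
      rw [zpow_add_one, AlgEquiv.mul_apply, hg, map_add, map_intCast, ih]
      push_cast; ring
  | pred n ih =>
      rw [zpow_sub_one, AlgEquiv.mul_apply, hinv, map_sub, map_intCast, ih]
      push_cast; ring

lemma my_listprod_shift {F L ι : Type*} [CommSemiring F] [CommRing L] [Algebra F L]
    (x : L) (f : ι → (L ≃ₐ[F] L)) (c : ι → ℤ) :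
    ∀ l : List ι, (∀ i ∈ l, f i x = x + ((c i : ℤ) : L)) →
      (l.map f).prod x = x + (((l.map c).sum : ℤ) : L) := by
  intro l
  induction l with
  | nil => simp
  | cons a t ih =>
      intro h
      rw [List.map_cons, List.prod_cons, AlgEquiv.mul_apply,
        ih (fun i hi => h i (List.mem_cons_of_mem a hi)), map_add, map_intCast,
        h a List.mem_cons_self, List.map_cons, List.sum_cons]
      push_cast; ring

lemma my_thetaPowS_shift {F L ι : Type*} [CommSemiring F] [CommRing L] [Algebra F L] [Fintype ι]
    (θ : ι → (L ≃ₐ[F] L)) (α : ι → ℤ) (x : L) (c : ι → ℤ) (h : ∀ i, θ i x = x + ((c i : ℤ) : L)) :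
    thetaPowS θ α x = x + ((∑ i, α i * c i : ℤ) : L) := by
  show (Finset.univ.toList.map fun i => θ i ^ α i).prod x = _
  rw [my_listprod_shift x (fun i => θ i ^ α i) (fun i => α i * c i) Finset.univ.toList
    (fun i _ => my_zpow_shift (θ i) x (c i) (h i) (α i))]
  congr 2
  exact Finset.sum_map_toList Finset.univ fun i => α i * c i

lemma my_thetaPowS_xv (σ : Fin k → (MvRat K k ≃ₐ[K] MvRat K k))
    (hσ : ∀ i : Fin k, σ i (xv i) = xv i + 1)
    (hσfix : ∀ i l : Fin k, i ≠ l → σ i (xv l) = xv l)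
    (α : Fin k → ℤ) (j : Fin k) :
    thetaPowS σ α (xv j) = xv j + ((α j : ℤ) : MvRat K k) := by
  rw [my_thetaPowS_shift σ α (xv j) (fun l => if l = j then 1 else 0) ?_]
  · congr 2
    simp [mul_ite, Finset.sum_ite_eq']
  · intro l
    by_cases hl : l = j
    · subst hl; simpa using hσ l
    · simp [hσfix l j hl, hl]

end MyAux

section MyBasis
open Module
lemma my_basis_extend {k r : ℕ} (hrk : r ≤ k) (v : Fin r → (Fin k → ℚ))
    (hli : LinearIndependent ℚ v) :
    ∃ b : Basis (Fin k) ℚ (Fin k → ℚ), ∀ i : Fin r, b (Fin.castLE hrk i) = v i := by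
  classical
  set W : Submodule ℚ (Fin k → ℚ) := Submodule.span ℚ (Set.range v) with hW
  obtain ⟨W', hWc⟩ := Submodule.exists_isCompl W
  have hfr : finrank ℚ W = r := by
    simpa using finrank_span_eq_card hli
  have hfull : finrank ℚ (Fin k → ℚ) = k := by simp
  have hfr' : finrank ℚ W' = k - r := by
    have h := Submodule.finrank_add_eq_of_isCompl hWc
    rw [hfr, hfull] at h
    omega
  let bW' : Basis (Fin (k - r)) ℚ W' := finBasisOfFinrankEq ℚ W' hfr'
  have hspan' : Submodule.span ℚ (Set.range fun t => (bW' t : Fin k → ℚ)) = W' := by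
    have : (Set.range fun t => (bW' t : Fin k → ℚ)) = W'.subtype '' (Set.range bW') := by
      rw [← Set.range_comp]; rfl
    rw [this, ← Submodule.map_span, bW'.span_eq, Submodule.map_top, Submodule.range_subtype]
  have hli2 : LinearIndependent ℚ (Sum.elim v (fun t => (bW' t : Fin k → ℚ))) := by
    apply LinearIndependent.sum_type hli
    · exact bW'.linearIndependent.map' W'.subtype (Submodule.ker_subtype W')
    · rw [hspan', ← hW]; exact hWc.disjoint
  have hsp : ⊤ ≤ Submodule.span ℚ (Set.range (Sum.elim v (fun t => (bW' t : Fin k → ℚ)))) := by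
    rw [Set.Sum.elim_range, Submodule.span_union, hspan', ← hW, hWc.sup_eq_top]
  let b0 : Basis (Fin r ⊕ Fin (k - r)) ℚ (Fin k → ℚ) := Basis.mk hli2 hsp
  let e : (Fin r ⊕ Fin (k - r)) ≃ Fin k :=
    finSumFinEquiv.trans (finCongr (by omega))
  refine ⟨b0.reindex e, fun i => ?_⟩
  rw [Basis.reindex_apply]
  have he : e.symm (Fin.castLE hrk i) = Sum.inl i := by
    rw [Equiv.symm_apply_eq]
    apply Fin.ext
    simp [e]
  rw [he]
  simp [b0, Basis.mk_apply]
end MyBasis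

set_option maxHeartbeats 2000000 in
set_option synthInstance.maxHeartbeats 1000000 in
/-- **Proposition: difference transformation, shift case.** Let `K = F(z)`
and let `σ₁,…,σ_r` (`1 ≤ r ≤ k`), `σᵢ = σ_y^{βᵢ}`, be independent elements of
`G^σ = ⟨σ_{y₁},…,σ_{y_k}⟩`. Then there is a `K`-automorphism `φ` of `K(y)` with
`φ∘σᵢ = σ_{yᵢ}∘φ` for all `i`, and consequently `f ∈ K(y)` is `(σ₁,…,σ_r)`-summable in
`K(y)` iff `φ(f)` is `(σ_{y₁},…,σ_{y_r})`-summable in `K(y)`. -/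
theorem stmt_12 {F : Type*} [Field F] [CharZero F] {k m : ℕ}
    (σ : Fin k → (MvRat (MvRat F m) k ≃ₐ[MvRat F m] MvRat (MvRat F m) k))
    (hσ : ∀ i : Fin k, σ i (xv i) = xv i + 1)
    (hσfix : ∀ i l : Fin k, i ≠ l → σ i (xv l) = xv l)
    (r : ℕ) (hr1 : 1 ≤ r) (hrk : r ≤ k)
    (β : Fin r → (Fin k → ℤ))
    -- independence of `σ₁,…,σ_r`: `σ₁^{ℓ₁}⋯σ_r^{ℓ_r} = 1` forces `ℓ = 0`
    (hindep : ∀ ℓ : Fin r → ℤ,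
      thetaPowS (fun i : Fin r => thetaPowS σ (β i)) ℓ = 1 → ℓ = 0) :
    ∃ φ : MvRat (MvRat F m) k ≃ₐ[MvRat F m] MvRat (MvRat F m) k,
      (∀ (i : Fin r) (x : MvRat (MvRat F m) k),
        φ (thetaPowS σ (β i) x) = σ (Fin.castLE hrk i) (φ x)) ∧
      ∀ f : MvRat (MvRat F m) k,
        ((∃ g : Fin r → MvRat (MvRat F m) k,
            f = ∑ i : Fin r, (thetaPowS σ (β i) (g i) - g i)) ↔
          (∃ g : Fin r → MvRat (MvRat F m) k,
            φ f = ∑ i : Fin r, (σ (Fin.castLE hrk i) (g i) - g i))) := by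
  classical
  -- step 1: linear independence of β over ℤ
  have hbZ : LinearIndependent ℤ β := by
    rw [Fintype.linearIndependent_iff]
    intro ℓ hℓ
    have h0 : thetaPowS (fun i => thetaPowS σ (β i)) ℓ = 1 := by
      apply my_xv_ext
      intro j
      rw [my_thetaPowS_shift _ ℓ (xv j) (fun i => β i j)
        (fun i => my_thetaPowS_xv σ hσ hσfix (β i) j)]
      have hz : (∑ i, ℓ i * β i j) = 0 := by
        have := congrFun hℓ j
        simpa [Finset.sum_apply, smul_eq_mul] using this
      simp [hz]
    exact fun i => congrFun (hindep ℓ h0) i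
  -- step 2: linear independence over ℚ
  set vβ : Fin r → (Fin k → ℚ) := fun i j => ((β i j : ℤ) : ℚ) with hvβ
  have hliQ : LinearIndependent ℚ vβ := by
    let cmap : (Fin k → ℤ) →ₗ[ℤ] (Fin k → ℚ) :=
      { toFun := fun w j => ((w j : ℤ) : ℚ)
        map_add' := by intro a b; funext j; push_cast; simp
        map_smul' := by intro n a; funext j; simp [zsmul_eq_mul] }
    have hinj : Function.Injective cmap := by
      intro a b h
      funext j
      exact Int.cast_injective (α := ℚ) (congrFun h j)
    have h1 : LinearIndependent ℤ vβ :=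
      (show vβ = cmap ∘ β from rfl) ▸ hbZ.map' cmap (LinearMap.ker_eq_bot.mpr hinj)
    exact (LinearIndependent.iff_fractionRing ℤ ℚ).mp h1
  -- step 3: basis
  obtain ⟨b, hb⟩ := my_basis_extend hrk vβ hliQ
  -- step 4: substitution automorphism on polynomials
  let e0 : Module.Basis (Fin k) ℚ (Fin k → ℚ) := Pi.basisFun ℚ (Fin k)
  let A : Matrix (Fin k) (Fin k) ℚ := e0.toMatrix b
  let Nm : Matrix (Fin k) (Fin k) ℚ := b.toMatrix e0
  have hNA : Nm * A = 1 := Module.Basis.toMatrix_mul_toMatrix_flip b e0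
  have hAN : A * Nm = 1 := Module.Basis.toMatrix_mul_toMatrix_flip e0 b
  let cQK : ℚ →+* (MvRat F m) := algebraMap ℚ (MvRat F m)
  let sub : Matrix (Fin k) (Fin k) ℚ → ((MvPolynomial (Fin k) (MvRat F m)) →ₐ[(MvRat F m)] (MvPolynomial (Fin k) (MvRat F m))) := fun Mq =>
    MvPolynomial.aeval (fun j => ∑ l, MvPolynomial.C (cQK (Mq j l)) * MvPolynomial.X l)
  have key : ∀ Mq Nq : Matrix (Fin k) (Fin k) ℚ, Nq * Mq = 1 →
      (sub Mq).comp (sub Nq) = AlgHom.id (MvRat F m) (MvPolynomial (Fin k) (MvRat F m)) := by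
    intro Mq Nq h
    apply MvPolynomial.algHom_ext
    intro j
    simp only [sub, cQK]
    simp only [AlgHom.comp_apply, AlgHom.id_apply, MvPolynomial.aeval_X, map_sum, map_mul,
      MvPolynomial.aeval_C, MvPolynomial.algebraMap_eq]
    simp_rw [Finset.mul_sum, ← mul_assoc, ← map_mul]
    rw [Finset.sum_comm]
    simp_rw [← Finset.sum_mul, ← map_sum]
    have h' : ∀ i, (∑ l, Nq j l * Mq l i) = if j = i then 1 else 0 := by
      intro i
      have := congrFun (congrFun h j) i
      rwa [Matrix.mul_apply, Matrix.one_apply] at this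
    simp_rw [h']
    simp [apply_ite, Finset.sum_ite_eq]
  let φpoly : (MvPolynomial (Fin k) (MvRat F m)) ≃ₐ[(MvRat F m)] (MvPolynomial (Fin k) (MvRat F m)) := AlgEquiv.ofAlgHom (sub A) (sub Nm) (key A Nm hNA) (key Nm A hAN)
  let φ : (MvRat (MvRat F m) k) ≃ₐ[(MvRat F m)] (MvRat (MvRat F m) k) := IsFractionRing.algEquivOfAlgEquiv (K := (MvRat (MvRat F m) k)) (L := (MvRat (MvRat F m) k)) φpoly
  -- step 5: compute φ on generators
  have hφx : ∀ j, φ (xv j) = ∑ l, algebraMap (MvPolynomial (Fin k) (MvRat F m)) (MvRat (MvRat F m) k) (MvPolynomial.C (cQK (A j l))) * xv l := by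
    intro j
    show φ (algebraMap (MvPolynomial (Fin k) (MvRat F m)) (MvRat (MvRat F m) k) (MvPolynomial.X j)) = _
    rw [IsFractionRing.algEquivOfAlgEquiv_algebraMap]
    have : φpoly (MvPolynomial.X j) = ∑ l, MvPolynomial.C (cQK (A j l)) * MvPolynomial.X l := by
      show sub A (MvPolynomial.X j) = _
      simp only [sub, cQK]
      exact MvPolynomial.aeval_X _ j
    rw [this, map_sum]
    simp [xv, map_mul]
  -- σ and φ fix the constants
  have hconst : ∀ (g : (MvRat (MvRat F m) k) ≃ₐ[(MvRat F m)] (MvRat (MvRat F m) k)) (a : ℚ),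
      g (algebraMap (MvPolynomial (Fin k) (MvRat F m)) (MvRat (MvRat F m) k) (MvPolynomial.C (cQK a))) = algebraMap (MvPolynomial (Fin k) (MvRat F m)) (MvRat (MvRat F m) k) (MvPolynomial.C (cQK a)) := by
    intro g a
    rw [show (MvPolynomial.C (cQK a) : (MvPolynomial (Fin k) (MvRat F m))) = algebraMap (MvRat F m) (MvPolynomial (Fin k) (MvRat F m)) (cQK a) from rfl,
      ← IsScalarTower.algebraMap_apply]
    exact g.commutes (cQK a)
  -- step 6: intertwining
  have hinter : ∀ (i : Fin r) (x : (MvRat (MvRat F m) k)),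
      φ (thetaPowS σ (β i) x) = σ (Fin.castLE hrk i) (φ x) := by
    intro i
    have heq : (thetaPowS σ (β i)).trans φ = φ.trans (σ (Fin.castLE hrk i)) := by
      apply my_xv_ext
      intro j
      simp only [AlgEquiv.trans_apply]
      rw [my_thetaPowS_xv σ hσ hσfix (β i) j, map_add, map_intCast, hφx j, map_sum]
      simp only [map_mul]
      have hσl : ∀ l, σ (Fin.castLE hrk i) (xv l)
          = xv l + if l = Fin.castLE hrk i then 1 else 0 := by
        intro l
        by_cases hl : l = Fin.castLE hrk i
        · subst hl; simpa using hσ (Fin.castLE hrk i)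
        · simp [hσfix (Fin.castLE hrk i) l (fun hh => hl hh.symm), hl]
      simp_rw [hconst (σ (Fin.castLE hrk i)), hσl, mul_add, Finset.sum_add_distrib, mul_ite,
        mul_one, mul_zero, Finset.sum_ite_eq', Finset.mem_univ, if_true]
      congr 1
      -- remaining: (β i j : (MvRat (MvRat F m) k)) = algebraMap (MvPolynomial (Fin k) (MvRat F m)) (MvRat (MvRat F m) k) (C (cQK (A j (castLE i))))
      have hA : A j (Fin.castLE hrk i) = ((β i j : ℤ) : ℚ) := by
        show e0.toMatrix b j (Fin.castLE hrk i) = _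
        rw [Module.Basis.toMatrix_apply, hb i]
        simp [e0, vβ]
      rw [hA]
      rw [show (MvPolynomial.C (cQK ((β i j : ℤ) : ℚ)) : (MvPolynomial (Fin k) (MvRat F m))) = algebraMap (MvRat F m) (MvPolynomial (Fin k) (MvRat F m)) (cQK ((β i j : ℤ) : ℚ)) from rfl,
        ← IsScalarTower.algebraMap_apply]
      push_cast
      rw [map_intCast, map_intCast]
    intro x
    have := AlgEquiv.ext_iff.mp heq x
    simpa [AlgEquiv.trans_apply] using this
  refine ⟨φ, hinter, fun f => ⟨?_, ?_⟩⟩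
  · rintro ⟨g, rfl⟩
    refine ⟨fun i => φ (g i), ?_⟩
    rw [map_sum]
    simp only [map_sub, hinter]
  · rintro ⟨g, hg⟩
    refine ⟨fun i => φ.symm (g i), φ.injective ?_⟩
    rw [map_sum]
    simp only [map_sub, hinter, AlgEquiv.apply_symm_apply]
    exact hg
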